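/- Let X be a nonempty compact convex subset of a normed space and f : X → ℝ a differentiable k-strongly convex function with respect to the norm ‖·‖, i.e., f(x) ≥ f(y) + ⟨∇f(y), x−y⟩ + (k/2)‖x−y‖² for all x,y ∈ X. For two linear functionals y₁, y₂, let xᵢ = argmax_{x∈X} (⟨x, yᵢ⟩ − f(x)) for i = 1,2. Then ‖x₁ − x₂‖ ≤ ‖y₁ − y₂‖_* / k, where ‖·‖_* is the dual norm. -/

import Mathlib

/-- Let `X` be a nonempty compact convex subset of a real normed space and let `f` be a
`k`-strongly convex function on `X` with (Gateaux) gradient `f'`, i.e.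
`f x ≥ f y + f' y (x - y) + k/2 * ‖x - y‖²` for all `x, y ∈ X`.  If `x₁`, `x₂` are the
maximizers over `X` of `x ↦ y₁ x - f x` and `x ↦ y₂ x - f x` respectively, for continuous
linear functionals `y₁, y₂`, then `‖x₁ - x₂‖ ≤ ‖y₁ - y₂‖ / k`, where the norm of a
functional is the dual norm. -/
theorem strongly_convex_argmax_lipschitz {E : Type*} [NormedAddCommGroup E]
    [NormedSpace ℝ E] (X : Set E) (hX : X.Nonempty) (hXc : IsCompact X)
    (hXconv : Convex ℝ X)
    (f : E → ℝ) (f' : E → (E →L[ℝ] ℝ)) (k : ℝ) (hk : 0 < k)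
    (hsc : ∀ x ∈ X, ∀ y ∈ X, f y + f' y (x - y) + k / 2 * ‖x - y‖ ^ 2 ≤ f x)
    (y₁ y₂ : E →L[ℝ] ℝ) (x₁ x₂ : E) (hx₁ : x₁ ∈ X) (hx₂ : x₂ ∈ X)
    (hmax₁ : ∀ x ∈ X, y₁ x - f x ≤ y₁ x₁ - f x₁)
    (hmax₂ : ∀ x ∈ X, y₂ x - f x ≤ y₂ x₂ - f x₂) :
    ‖x₁ - x₂‖ ≤ ‖y₁ - y₂‖ / k := by
  -- key lemma
  have key : ∀ (y : E →L[ℝ] ℝ) (a b : E), a ∈ X → b ∈ X →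
      (∀ x ∈ X, y x - f x ≤ y a - f a) →
      y (b - a) + f a - f b + k / 2 * ‖b - a‖ ^ 2 ≤ 0 := by
    intro y a b ha hb hmax
    have hstep : ∀ t : ℝ, 0 < t → t ≤ 1 →
        y (b - a) + f a - f b + k / 2 * ‖b - a‖ ^ 2 ≤ k / 2 * t * ‖b - a‖ ^ 2 := by
      intro t ht0 ht1
      set m := a + t • (b - a) with hm
      have hmX : m ∈ X := by
        have := hXconv ha hb (by linarith : (0:ℝ) ≤ 1 - t) (le_of_lt ht0) (by ring)
        convert this using 1
        rw [hm]
        module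
      have hbm : b - m = (1 - t) • (b - a) := by rw [hm]; module
      have ham : a - m = (-t) • (b - a) := by rw [hm]; module
      have h1 := hsc b hb m hmX
      have h2 := hsc a ha m hmX
      have hnbm : ‖b - m‖ = (1 - t) * ‖b - a‖ := by
        rw [hbm, norm_smul, Real.norm_eq_abs, abs_of_nonneg (by linarith)]
      have hnam : ‖a - m‖ = t * ‖b - a‖ := by
        rw [ham, norm_smul, Real.norm_eq_abs, abs_of_neg (by linarith)]; ring
      have hlin : t * (f' m) (b - m) + (1 - t) * (f' m) (a - m) = 0 := by
        rw [hbm, ham, map_smul, map_smul]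
        simp only [smul_eq_mul]; ring
      -- f m ≤ (1-t) f a + t f b - k/2 t (1-t) ‖b-a‖²
      have hconv : f m ≤ (1 - t) * f a + t * f b - k / 2 * t * (1 - t) * ‖b - a‖ ^ 2 := by
        rw [hnbm] at h1; rw [hnam] at h2
        nlinarith [mul_le_mul_of_nonneg_left h1 (le_of_lt ht0),
          mul_le_mul_of_nonneg_left h2 (by linarith : (0:ℝ) ≤ 1 - t), hlin]
      have hmaxm := hmax m hmX
      have hym : y m = y a + t * y (b - a) := by
        rw [hm, map_add, map_smul]; simp [smul_eq_mul]
      have : t * y (b - a) ≤ t * (f b - f a) - k / 2 * t * (1 - t) * ‖b - a‖ ^ 2 := by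
        rw [hym] at hmaxm
        linarith
      have := (mul_le_mul_iff_right₀ ht0).mp (by nlinarith : t * (y (b - a) + f a - f b + k / 2 * ‖b - a‖ ^ 2) ≤ t * (k / 2 * t * ‖b - a‖ ^ 2))
      linarith [this]
    -- take t → 0
    by_contra hcon
    push_neg at hcon
    set A := y (b - a) + f a - f b + k / 2 * ‖b - a‖ ^ 2 with hA
    have hd : 0 < k / 2 * ‖b - a‖ ^ 2 + 1 := by positivity
    set t := min 1 (A / (k / 2 * ‖b - a‖ ^ 2 + 1)) with htdef
    have ht0 : 0 < t := lt_min one_pos (div_pos hcon hd)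
    have ht1 : t ≤ 1 := min_le_left _ _
    have h := hstep t ht0 ht1
    have : k / 2 * t * ‖b - a‖ ^ 2 < A := by
      have htle : t ≤ A / (k / 2 * ‖b - a‖ ^ 2 + 1) := min_le_right _ _
      have : k / 2 * t * ‖b - a‖ ^ 2 ≤ (A / (k / 2 * ‖b - a‖ ^ 2 + 1)) * (k / 2 * ‖b - a‖ ^ 2) := by
        have hsq : (0:ℝ) ≤ k / 2 * ‖b - a‖ ^ 2 := by positivity
        nlinarith
      calc k / 2 * t * ‖b - a‖ ^ 2 ≤ (A / (k / 2 * ‖b - a‖ ^ 2 + 1)) * (k / 2 * ‖b - a‖ ^ 2) := this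
        _ < A := by
          rw [div_mul_eq_mul_div, div_lt_iff₀ hd]
          have := mul_lt_mul_of_pos_left (lt_add_one (k / 2 * ‖b - a‖ ^ 2)) hcon
          nlinarith
    linarith
  have k1 := key y₁ x₁ x₂ hx₁ hx₂ hmax₁
  have k2 := key y₂ x₂ x₁ hx₂ hx₁ hmax₂
  have hnorm : ‖x₁ - x₂‖ = ‖x₂ - x₁‖ := norm_sub_rev _ _
  have hsum : k * ‖x₁ - x₂‖ ^ 2 ≤ (y₁ - y₂) (x₁ - x₂) := by
    have e1 : y₂ (x₁ - x₂) = - y₂ (x₂ - x₁) := by rw [← map_neg]; congr 1; abel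
    have e2 : (y₁ - y₂) (x₁ - x₂) = y₁ (x₁ - x₂) - y₂ (x₁ - x₂) := by simp
    have e3 : y₁ (x₁ - x₂) = - y₁ (x₂ - x₁) := by rw [← map_neg]; congr 1; abel
    rw [hnorm] at k2 ⊢
    rw [e2, e1, e3]
    linarith
  have hbound : (y₁ - y₂) (x₁ - x₂) ≤ ‖y₁ - y₂‖ * ‖x₁ - x₂‖ :=
    le_trans (le_abs_self _) ((y₁ - y₂).le_opNorm _)
  rcases eq_or_lt_of_le (norm_nonneg (x₁ - x₂)) with h0 | h0
  · rw [← h0]; positivity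
  · rw [le_div_iff₀ hk]
    nlinarith
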